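/- arXiv:2104.06228 — 2 statements merged into one kernel-verified Lean document; each statement's English description precedes it below -/
import Mathlib

section
/- Let p be an odd prime, v ∈ ℚ_p a p-adic unit that is not a square in ℚ_p, A = diag(1, -v, p), Q_+(x) = xᵀAx, and SO(3)_p = {L ∈ M₃(ℚ_p) : LᵀAL = A, det L = 1}. Then for any two nonzero vectors x, y ∈ ℚ_p³ with Q_+(x) = Q_+(y), there exists L ∈ SO(3)_p with L x = y. -/
open Matrix


variable {K : Type*} [Field K]

lemma vmv_mulVec (a b u : Fin 3 → K) : (vecMulVec a b) *ᵥ u = (b ⬝ᵥ u) • a := by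
  ext i
  simp only [mulVec, dotProduct, vecMulVec_apply, Pi.smul_apply, smul_eq_mul, Finset.sum_mul]
  exact Finset.sum_congr rfl fun j _ => by ring

lemma mul_vmv (M : Matrix (Fin 3) (Fin 3) K) (a b : Fin 3 → K) :
    M * vecMulVec a b = vecMulVec (M *ᵥ a) b := by
  ext i j
  simp only [mul_apply, vecMulVec_apply, mulVec, dotProduct, Finset.sum_mul]
  exact Finset.sum_congr rfl fun k _ => by ring

lemma vmv_mul (M : Matrix (Fin 3) (Fin 3) K) (a b : Fin 3 → K) :
    vecMulVec a b * M = vecMulVec a (b ᵥ* M) := by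
  ext i j
  simp only [mul_apply, vecMulVec_apply, vecMul, dotProduct, Finset.mul_sum]
  exact Finset.sum_congr rfl fun k _ => by ring

lemma vmv_transpose (a b : Fin 3 → K) : (vecMulVec a b)ᵀ = vecMulVec b a := by
  ext i j; simp [vecMulVec_apply, mul_comm]

lemma vmv_mul_vmv (a b c d : Fin 3 → K) :
    vecMulVec a b * vecMulVec c d = (b ⬝ᵥ c) • vecMulVec a d := by
  ext i j
  simp only [mul_apply, vecMulVec_apply, Matrix.smul_apply, dotProduct, smul_eq_mul, Finset.sum_mul]
  exact Finset.sum_congr rfl fun k _ => by ring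

lemma det_one_sub_smul_vmv (c : K) (a b : Fin 3 → K) :
    (1 - c • vecMulVec a b).det = 1 - c * (a ⬝ᵥ b) := by
  simp [det_fin_three, vecMulVec_apply, one_apply, dotProduct, Fin.sum_univ_three]
  ring

/-- Reflection in the nonisotropic vector `w`. -/
noncomputable def reflM (A : Matrix (Fin 3) (Fin 3) K) (w : Fin 3 → K) :
    Matrix (Fin 3) (Fin 3) K :=
  1 - (2 / (w ⬝ᵥ A *ᵥ w)) • vecMulVec w (A *ᵥ w)

lemma reflM_isom (A : Matrix (Fin 3) (Fin 3) K) (hAs : Aᵀ = A) (w : Fin 3 → K)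
    (hw : w ⬝ᵥ A *ᵥ w ≠ 0) : (reflM A w)ᵀ * A * reflM A w = A := by
  have hwA : w ᵥ* A = A *ᵥ w := by rw [← hAs, vecMul_transpose, hAs]
  have h1 : A * vecMulVec w (A *ᵥ w) = vecMulVec (A *ᵥ w) (A *ᵥ w) := mul_vmv ..
  have h2 : vecMulVec (A *ᵥ w) w * A = vecMulVec (A *ᵥ w) (A *ᵥ w) := by
    rw [vmv_mul, hwA]
  have h3 : vecMulVec (A *ᵥ w) w * (A * vecMulVec w (A *ᵥ w)) =
      (w ⬝ᵥ A *ᵥ w) • vecMulVec (A *ᵥ w) (A *ᵥ w) := by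
    rw [h1, vmv_mul_vmv, dotProduct_comm]
  rw [reflM]
  simp only [transpose_sub, transpose_smul, transpose_one, vmv_transpose,
    sub_mul, mul_sub, one_mul, mul_one, smul_mul_assoc, mul_smul_comm, mul_assoc]
  rw [h1, h2, vmv_mul_vmv  , smul_smul (2 / (w ⬝ᵥ A *ᵥ w)),
    div_mul_cancel₀ 2 hw]
  module

lemma reflM_det (A : Matrix (Fin 3) (Fin 3) K) (w : Fin 3 → K)
    (hw : w ⬝ᵥ A *ᵥ w ≠ 0) : (reflM A w).det = -1 := by
  rw [reflM, det_one_sub_smul_vmv, div_mul_cancel₀ 2 hw]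
  ring

lemma reflM_mulVec (A : Matrix (Fin 3) (Fin 3) K) (w u : Fin 3 → K) :
    (reflM A w) *ᵥ u = u - (2 / (w ⬝ᵥ A *ᵥ w) * ((A *ᵥ w) ⬝ᵥ u)) • w := by
  rw [reflM, sub_mulVec, one_mulVec, smul_mulVec, vmv_mulVec, smul_smul]

variable {p : ℕ} [hpp : Fact p.Prime]

lemma two_norm_one (hp : p ≠ 2) : ‖(2 : ℚ_[p])‖ = 1 := by
  have hle : ‖(2 : ℚ_[p])‖ ≤ 1 := by
    have := Padic.norm_int_le_one (p := p) 2
    simpa using this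
  have hlt : ¬ ‖(2 : ℚ_[p])‖ < 1 := by
    intro h
    have := (Padic.norm_intCast_lt_one_iff (p := p) (k := 2)).mp (by simpa using h)
    have h2 := Int.le_of_dvd (by norm_num) this
    have := hpp.out.two_le
    omega
  exact le_antisymm hle (not_lt.mp hlt)

lemma isSquare_of_near (hp : p ≠ 2) (u t : ℚ_[p]) (hu : ‖u‖ = 1) (ht : ‖t‖ = 1)
    (hnear : ‖t ^ 2 - u‖ < 1) : IsSquare u := by
  set U : ℤ_[p] := ⟨u, hu.le⟩ with hU
  set T : ℤ_[p] := ⟨t, ht.le⟩ with hT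
  set F : Polynomial ℤ_[p] := Polynomial.X ^ 2 - Polynomial.C U with hF
  have hevalT : F.eval T = T ^ 2 - U := by simp [hF]
  have hderiv : F.derivative = Polynomial.C 2 * Polynomial.X := by
    simp [hF, Polynomial.derivative_X_pow]
    rw [← Polynomial.C_1, ← Polynomial.C_add]; norm_num
  have hderiveval : F.derivative.eval T = 2 * T := by simp [hderiv]
  have hTnorm : ‖T‖ = 1 := by rw [PadicInt.norm_def]; exact ht
  have hdnorm : ‖F.derivative.eval T‖ = 1 := by
    rw [hderiveval, norm_mul, hTnorm, mul_one, PadicInt.norm_def]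
    push_cast
    exact two_norm_one hp
  have hmain : ‖F.eval T‖ < ‖F.derivative.eval T‖ ^ 2 := by
    rw [hdnorm, hevalT, PadicInt.norm_def]
    push_cast
    simpa using hnear
  obtain ⟨z, hz, -⟩ := hensels_lemma hmain
  rw [hF] at hz
  simp only [Polynomial.eval_sub, Polynomial.eval_pow, Polynomial.eval_X,
    Polynomial.eval_C, sub_eq_zero, map_sub, map_pow, Polynomial.aeval_X, Polynomial.aeval_C,
    Algebra.algebraMap_self, RingHom.id_apply] at hz
  refine ⟨(z : ℚ_[p]), ?_⟩
  have : ((z ^ 2 : ℤ_[p]) : ℚ_[p]) = u := by rw [hz]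
  push_cast at this
  rw [← this]; ring

lemma norm_sq_sub_v (hp : p ≠ 2) (v : ℚ_[p]) (hv : ‖v‖ = 1) (hvsq : ¬ IsSquare v)
    (a b : ℚ_[p]) : ‖a ^ 2 - v * b ^ 2‖ = (max ‖a‖ ‖b‖) ^ 2 := by
  rcases eq_or_ne b 0 with rfl | hb
  · simp [norm_pow, max_eq_left (norm_nonneg a)]
  rcases eq_or_ne a 0 with rfl | ha
  · simp [norm_mul, hv, norm_pow, max_eq_right (norm_nonneg b)]
  rcases eq_or_ne ‖a‖ ‖b‖ with he | hne
  · -- equal norms; ‖t^2 - v‖ = 1 where t = a / b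
    set t := a / b with htdef
    have htn : ‖t‖ = 1 := by
      rw [htdef, norm_div, he, div_self (norm_ne_zero_iff.mpr hb)]
    have hfac : a ^ 2 - v * b ^ 2 = (t ^ 2 - v) * b ^ 2 := by
      rw [htdef]
      field_simp [htdef]
    have hle : ‖t ^ 2 - v‖ ≤ 1 := by
      calc ‖t ^ 2 - v‖ = ‖t ^ 2 + (-v)‖ := by rw [sub_eq_add_neg]
        _ ≤ max ‖t ^ 2‖ ‖-v‖ := Padic.nonarchimedean _ _
        _ ≤ 1 := by rw [norm_neg, norm_pow, htn, hv]; norm_num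
    have h1 : ‖t ^ 2 - v‖ = 1 := by
      rcases lt_or_eq_of_le hle with hlt | heq
      · exact absurd (isSquare_of_near hp v t hv htn hlt) hvsq
      · exact heq
    rw [hfac, norm_mul, h1, one_mul, norm_pow, he, max_self]
  · -- distinct norms: ultrametric equality
    have h2 : ‖a ^ 2‖ ≠ ‖-(v * b ^ 2)‖ := by
      rw [norm_neg, norm_mul, hv, one_mul, norm_pow, norm_pow]
      intro h
      exact hne ((pow_left_inj₀ (norm_nonneg a) (norm_nonneg b) (by norm_num)).mp h)
    have := Padic.add_eq_max_of_ne (p := p) h2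
    rw [sub_eq_add_neg]
    rw [this, norm_neg, norm_mul, hv, one_mul, norm_pow, norm_pow]
    rcases le_total ‖a‖ ‖b‖ with h | h
    · rw [max_eq_right h, max_eq_right (pow_le_pow_left₀ (norm_nonneg a) h 2)]
    · rw [max_eq_left h, max_eq_left (pow_le_pow_left₀ (norm_nonneg b) h 2)]
lemma padic_aniso (hp : p ≠ 2) (v : ℚ_[p]) (hv : ‖v‖ = 1) (hvsq : ¬ IsSquare v)
    (a b c : ℚ_[p]) (h : a ^ 2 - v * b ^ 2 + p * c ^ 2 = 0) :
    a = 0 ∧ b = 0 ∧ c = 0 := by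
  have key : ‖a ^ 2 - v * b ^ 2‖ = ‖(p : ℚ_[p]) * c ^ 2‖ := by
    have : a ^ 2 - v * b ^ 2 = -((p : ℚ_[p]) * c ^ 2) := by linear_combination h
    rw [this, norm_neg]
  rw [norm_sq_sub_v hp v hv hvsq, norm_mul, Padic.norm_p, norm_pow] at key
  rcases eq_or_ne c 0 with rfl | hc
  · simp only [norm_zero, ne_eq, OfNat.ofNat_ne_zero, not_false_eq_true, zero_pow, mul_zero,
      pow_eq_zero_iff] at key
    have ha : ‖a‖ = 0 := le_antisymm (key ▸ le_max_left _ _) (norm_nonneg _)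
    have hb : ‖b‖ = 0 := le_antisymm (key ▸ le_max_right _ _) (norm_nonneg _)
    exact ⟨norm_eq_zero.mp ha, norm_eq_zero.mp hb, rfl⟩
  · exfalso
    have hp0 : (0 : ℝ) < (p : ℝ) := by exact_mod_cast hpp.out.pos
    have hmaxne : max ‖a‖ ‖b‖ ≠ 0 := by
      intro h0
      rw [h0] at key
      have h1 : (p : ℝ)⁻¹ * ‖c‖ ^ 2 = 0 := by simpa using key.symm
      rcases mul_eq_zero.mp h1 with h2 | h2
      · exact (inv_pos.mpr hp0).ne' h2
      · exact hc (norm_eq_zero.mp (pow_eq_zero_iff (by norm_num) |>.mp h2))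
    obtain ⟨u, hu0, humax⟩ : ∃ u : ℚ_[p], u ≠ 0 ∧ max ‖a‖ ‖b‖ = ‖u‖ := by
      rcases le_total ‖a‖ ‖b‖ with hle | hle
      · have hm := max_eq_right hle
        exact ⟨b, fun h0 => hmaxne (by rw [hm, h0, norm_zero]), hm⟩
      · have hm := max_eq_left hle
        exact ⟨a, fun h0 => hmaxne (by rw [hm, h0, norm_zero]), hm⟩
    rw [humax, Padic.norm_eq_zpow_neg_valuation hu0, Padic.norm_eq_zpow_neg_valuation hc] at key
    have hp1 : (p : ℝ) ≠ 1 := by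
      have := hpp.out.two_le; intro h1; rw [show (1:ℝ) = ((1:ℕ):ℝ) by norm_num] at h1
      have := Nat.cast_injective h1; omega
    rw [pow_two, pow_two, ← zpow_add₀ hp0.ne', ← zpow_add₀ hp0.ne',
      ← _root_.zpow_neg_one, ← zpow_add₀ hp0.ne'] at key
    have := zpow_right_injective₀ hp0 hp1 key
    omega

lemma exists_orth (K : Type*) [Field K] (a b : Fin 3 → K) :
    ∃ w : Fin 3 → K, w ≠ 0 ∧ a ⬝ᵥ w = 0 ∧ b ⬝ᵥ w = 0 := by
  set M : Matrix (Fin 2) (Fin 3) K := Matrix.of ![a, b] with hM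
  have hker : LinearMap.ker M.mulVecLin ≠ ⊥ := by
    intro hbot
    have hinj : Function.Injective M.mulVecLin := LinearMap.ker_eq_bot.mp hbot
    have := LinearMap.finrank_le_finrank_of_injective hinj
    rw [Module.finrank_fin_fun, Module.finrank_fin_fun] at this
    omega
  obtain ⟨w, hwmem, hw0⟩ := Submodule.exists_mem_ne_zero_of_ne_bot hker
  refine ⟨w, hw0, ?_, ?_⟩
  · have h0 := congrFun (LinearMap.mem_ker.mp hwmem) 0
    simpa [hM, mulVec] using h0
  · have h1 := congrFun (LinearMap.mem_ker.mp hwmem) 1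
    simpa [hM, mulVec] using h1

/-- The action of `SO(3)_p` is transitive on the level sets of `Q₊`:
for any two nonzero vectors `x, y` with `Q₊(x) = Q₊(y)` there is `L ∈ SO(3)_p`
with `L x = y`. -/
theorem so3p_transitive_on_level_sets
    (p : ℕ) [Fact p.Prime] (hp : p ≠ 2)
    (v : ℚ_[p]) (hv : ‖v‖ = 1) (hvsq : ¬ IsSquare v)
    (A : Matrix (Fin 3) (Fin 3) ℚ_[p])
    (hA : A = Matrix.diagonal ![1, -v, (p : ℚ_[p])])
    (Q : (Fin 3 → ℚ_[p]) → ℚ_[p]) (hQ : ∀ z, Q z = z ⬝ᵥ A.mulVec z)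
    (x y : Fin 3 → ℚ_[p]) (hx : x ≠ 0) (hy : y ≠ 0)
    (hxy : Q x = Q y) :
    ∃ L : Matrix (Fin 3) (Fin 3) ℚ_[p], Lᵀ * A * L = A ∧ L.det = 1 ∧
      L.mulVec x = y := by
  have hAsym : Aᵀ = A := by rw [hA, diagonal_transpose]
  have hQform : ∀ z : Fin 3 → ℚ_[p],
      z ⬝ᵥ A *ᵥ z = z 0 ^ 2 - v * z 1 ^ 2 + p * z 2 ^ 2 := by
    intro z
    rw [hA]
    simp [dotProduct, mulVec, diagonal_apply, Fin.sum_univ_three]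
    ring
  have aniso : ∀ z : Fin 3 → ℚ_[p], z ⬝ᵥ A *ᵥ z = 0 → z = 0 := by
    intro z hz
    rw [hQform] at hz
    obtain ⟨h0, h1, h2⟩ := padic_aniso hp v hv hvsq _ _ _ hz
    funext i
    fin_cases i <;> assumption
  have hdot : ∀ u w : Fin 3 → ℚ_[p], (A *ᵥ u) ⬝ᵥ w = u ⬝ᵥ A *ᵥ w := by
    intro u w
    rw [dotProduct_mulVec, ← mulVec_transpose, hAsym, dotProduct_comm]
  by_cases hxyeq : x = y
  · exact ⟨1, by simp, by simp, by rw [one_mulVec, hxyeq]⟩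
  · set d := x - y with hddef
    have hd : d ≠ 0 := sub_ne_zero.mpr hxyeq
    have hQd : d ⬝ᵥ A *ᵥ d ≠ 0 := fun h => hd (aniso d h)
    obtain ⟨w, hw0, hw1, hw2⟩ := exists_orth ℚ_[p] (A *ᵥ x) (A *ᵥ y)
    have hQw : w ⬝ᵥ A *ᵥ w ≠ 0 := fun h => hw0 (aniso w h)
    refine ⟨reflM A d * reflM A w, ?_, ?_, ?_⟩
    · have h1 := reflM_isom A hAsym d hQd
      have h2 := reflM_isom A hAsym w hQw
      calc (reflM A d * reflM A w)ᵀ * A * (reflM A d * reflM A w)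
          = (reflM A w)ᵀ * ((reflM A d)ᵀ * A * reflM A d) * reflM A w := by
            rw [transpose_mul]
            simp only [Matrix.mul_assoc]
        _ = A := by rw [h1, h2]
    · rw [det_mul, reflM_det A d hQd, reflM_det A w hQw]
      norm_num
    · rw [← mulVec_mulVec]
      have hwx : (A *ᵥ w) ⬝ᵥ x = 0 := by
        rw [hdot, dotProduct_comm]
        exact hw1
      have hfix : reflM A w *ᵥ x = x := by
        rw [reflM_mulVec, hwx]
        simp
      rw [hfix, reflM_mulVec]
      have hQeq : x ⬝ᵥ A *ᵥ x = y ⬝ᵥ A *ᵥ y := by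
        have := hxy
        rw [hQ, hQ] at this
        exact this
      have hsym : y ⬝ᵥ A *ᵥ x = x ⬝ᵥ A *ᵥ y := by
        rw [← hdot y x, dotProduct_comm, ← hdot x y]
      have ht : (A *ᵥ d) ⬝ᵥ x = x ⬝ᵥ A *ᵥ x - x ⬝ᵥ A *ᵥ y := by
        rw [hdot, hddef, sub_dotProduct, hsym]
      have hexp : d ⬝ᵥ A *ᵥ d =
          x ⬝ᵥ A *ᵥ x - x ⬝ᵥ A *ᵥ y - (y ⬝ᵥ A *ᵥ x - y ⬝ᵥ A *ᵥ y) := by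
        rw [hddef, mulVec_sub, sub_dotProduct, dotProduct_sub, dotProduct_sub]
      have hQdval : d ⬝ᵥ A *ᵥ d = 2 * ((A *ᵥ d) ⬝ᵥ x) := by
        rw [hexp, ht, hsym]
        linear_combination -hQeq
      have hscal : 2 / (d ⬝ᵥ A *ᵥ d) * ((A *ᵥ d) ⬝ᵥ x) = 1 := by
        have hAdx0 : (A *ᵥ d) ⬝ᵥ x ≠ 0 := by
          intro h0
          rw [hQdval, h0, mul_zero] at hQd
          exact hQd rfl
        have key : ∀ t : ℚ_[p], t ≠ 0 → 2 / (2 * t) * t = 1 := by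
          intro t ht0
          field_simp
        rw [hQdval]
        exact key _ hAdx0
      rw [hscal, one_smul, hddef]
      abel
end

section
/- Let p be an odd prime, v ∈ ℚ_p a p-adic unit that is not a square in ℚ_p, A = diag(1, -v, p), Q_+(x) = xᵀAx and B(x,y) = xᵀAy. Let (g, h, n) be a basis of ℚ_p³ that is pairwise orthogonal with respect to B. Then Q_+(g) ≠ 0, and −Q_+(h)/Q_+(g) is not a square in ℚ_p; equivalently, there is no s ∈ ℚ_p with Q_+(g)·s² = −Q_+(h). -/
open Matrix

section Aux

variable {p : ℕ} [Fact p.Prime]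

-- Hensel: a unit close to a square is a square
lemma aux_hensel_square (hp : p ≠ 2) (v : ℚ_[p]) (hv : ‖v‖ = 1)
    (u : ℚ_[p]) (hu : ‖u‖ = 1) (hclose : ‖u ^ 2 - v‖ < 1) : IsSquare v := by
  set u' : ℤ_[p] := ⟨u, le_of_eq hu⟩
  set v' : ℤ_[p] := ⟨v, le_of_eq hv⟩
  set F : Polynomial ℤ_[p] := Polynomial.X ^ 2 - Polynomial.C v'
  have hderiv : F.derivative = Polynomial.C 2 * Polynomial.X := by
    simp [F]
    rw [one_add_one_eq_two]; exact (map_ofNat Polynomial.C 2).symm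
  have h2 : ‖(2 : ℤ_[p])‖ = 1 := by
    have hnd : ¬ ((p : ℤ) ∣ (2 : ℤ)) := by
      have hnd' : ¬ (p ∣ 2) := fun hd =>
        hp ((Nat.prime_dvd_prime_iff_eq Fact.out Nat.prime_two).mp hd)
      exact_mod_cast hnd'
    have hnlt := (PadicInt.norm_int_lt_one_iff_dvd (2 : ℤ)).not.mpr hnd
    have hle : ‖((2 : ℤ) : ℤ_[p])‖ ≤ 1 := PadicInt.norm_le_one _
    have : ‖((2 : ℤ) : ℤ_[p])‖ = 1 := le_antisymm hle (not_lt.mp hnlt)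
    exact_mod_cast this
  have hdu : ‖F.derivative.eval u'‖ = 1 := by
    rw [hderiv]
    simp only [Polynomial.eval_mul, Polynomial.eval_C, Polynomial.eval_X]
    rw [norm_mul, h2]
    have : ‖u'‖ = 1 := hu
    rw [this, mul_one]
  have hFu : ‖F.eval u'‖ < 1 := by
    have hF : F.eval u' = u' ^ 2 - v' := by simp [F]
    rw [hF]
    have hcoe : ‖u' ^ 2 - v'‖ = ‖u ^ 2 - v‖ := by
      rw [PadicInt.norm_def]
      push_cast
      rfl
    rw [hcoe]; exact hclose
  have hlt : ‖F.eval u'‖ < ‖F.derivative.eval u'‖ ^ 2 := by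
    rw [hdu]; simpa using hFu
  obtain ⟨z, hz, -⟩ := hensels_lemma hlt
  have hzv : z ^ 2 = v' := by
    have hF : F.eval z = z ^ 2 - v' := by simp [F]
    rw [Polynomial.coe_aeval_eq_eval, hF] at hz
    exact sub_eq_zero.mp hz
  refine ⟨(z : ℚ_[p]), ?_⟩
  have := congrArg (fun x : ℤ_[p] => (x : ℚ_[p])) hzv
  push_cast at this
  exact this.symm.trans (sq _)

-- ‖x² - v y²‖ = (max ‖x‖ ‖y‖)²
lemma aux_norm_sub (hp : p ≠ 2) (v : ℚ_[p]) (hv : ‖v‖ = 1) (hvsq : ¬ IsSquare v)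
    (x y : ℚ_[p]) : ‖x ^ 2 - v * y ^ 2‖ = max ‖x‖ ‖y‖ ^ 2 := by
  rcases eq_or_ne y 0 with hy | hy
  · simp [hy, norm_pow, le_max_iff, max_eq_left (norm_nonneg x)]
  · set t := x / y with ht
    have hx : x = t * y := by rw [ht, div_mul_cancel₀ x hy]
    have hkey : ‖t ^ 2 - v‖ = max ‖t‖ 1 ^ 2 := by
      rcases lt_trichotomy ‖t‖ 1 with h | h | h
      · have hlt : ‖t ^ 2‖ < ‖v‖ := by
          rw [norm_pow, hv]
          nlinarith [norm_nonneg t]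
        rw [sub_eq_add_neg, Padic.add_eq_max_of_ne (by rw [norm_neg]; exact ne_of_lt hlt)]
        rw [norm_neg, max_eq_right hlt.le, hv, max_eq_right h.le]
        norm_num
      · have hle : ‖t ^ 2 - v‖ ≤ 1 := by
          rw [sub_eq_add_neg]
          refine le_trans (Padic.nonarchimedean _ _) ?_
          rw [norm_neg, norm_pow, h, hv]; norm_num
        have hnlt : ¬ ‖t ^ 2 - v‖ < 1 := fun hc => hvsq (aux_hensel_square hp v hv t h hc)
        rw [max_eq_right h.le, one_pow]
        exact le_antisymm hle (not_lt.mp hnlt)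
      · have hlt : ‖v‖ < ‖t ^ 2‖ := by
          rw [norm_pow, hv]
          nlinarith
        rw [sub_eq_add_neg, Padic.add_eq_max_of_ne (by rw [norm_neg]; exact (ne_of_lt hlt).symm)]
        rw [norm_neg, max_eq_left hlt.le, norm_pow, max_eq_left h.le]
    have hfac : x ^ 2 - v * y ^ 2 = (t ^ 2 - v) * y ^ 2 := by rw [hx]; ring
    rw [hfac, norm_mul, norm_pow, hkey, hx, norm_mul]
    have hy' : 0 < ‖y‖ := norm_pos_iff.mpr hy
    rcases le_total ‖t‖ 1 with h | h
    · rw [max_eq_right h, max_eq_right (by nlinarith [norm_nonneg t])]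
      ring
    · rw [max_eq_left h, max_eq_left (by nlinarith [norm_nonneg t])]
      ring

-- anisotropy
lemma aux_aniso (hp : p ≠ 2) (v : ℚ_[p]) (hv : ‖v‖ = 1) (hvsq : ¬ IsSquare v)
    (x y z : ℚ_[p]) (h : x ^ 2 - v * y ^ 2 + p * z ^ 2 = 0) :
    x = 0 ∧ y = 0 ∧ z = 0 := by
  have hp1 : (1 : ℝ) < p := by exact_mod_cast (Fact.out : p.Prime).one_lt
  have hpq : (p : ℚ_[p]) ≠ 0 := by
    exact_mod_cast Nat.cast_ne_zero.mpr (Fact.out : p.Prime).ne_zero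
  have hxy : ‖x ^ 2 - v * y ^ 2‖ = ‖(p : ℚ_[p]) * z ^ 2‖ := by
    have heq : x ^ 2 - v * y ^ 2 = -((p : ℚ_[p]) * z ^ 2) := by linear_combination h
    rw [heq, norm_neg]
  rcases eq_or_ne z 0 with hz | hz
  · have h0 : ‖x ^ 2 - v * y ^ 2‖ = 0 := by rw [hxy, hz]; simp
    rw [aux_norm_sub hp v hv hvsq] at h0
    have hm : max ‖x‖ ‖y‖ = 0 := by
      nlinarith [le_max_left ‖x‖ ‖y‖, norm_nonneg x, le_max_right ‖x‖ ‖y‖]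
    have hx0 : ‖x‖ = 0 := le_antisymm (hm ▸ le_max_left _ _) (norm_nonneg x)
    have hy0 : ‖y‖ = 0 := le_antisymm (hm ▸ le_max_right _ _) (norm_nonneg y)
    exact ⟨norm_eq_zero.mp hx0, norm_eq_zero.mp hy0, hz⟩
  · exfalso
    have hzn : ‖(p : ℚ_[p]) * z ^ 2‖ ≠ 0 := by
      simp [hpq, hz, (Fact.out : p.Prime).ne_zero]
    have hmax : max ‖x‖ ‖y‖ ≠ 0 := by
      intro h0
      apply hzn
      rw [← hxy, aux_norm_sub hp v hv hvsq, h0]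
      norm_num
    obtain ⟨w, hw0, hwmax⟩ : ∃ w : ℚ_[p], w ≠ 0 ∧ max ‖x‖ ‖y‖ = ‖w‖ := by
      rcases le_total ‖x‖ ‖y‖ with h' | h'
      · refine ⟨y, ?_, max_eq_right h'⟩
        intro hc
        apply hmax
        rw [hc] at h'
        simp at h'
        simp [hc, h']
      · refine ⟨x, ?_, max_eq_left h'⟩
        intro hc
        apply hmax
        rw [hc] at h'
        simp at h'
        simp [hc, h']
    have h1 : ‖x ^ 2 - v * y ^ 2‖ = (p : ℝ) ^ (-(2 * w.valuation)) := by
      rw [aux_norm_sub hp v hv hvsq, hwmax, Padic.norm_eq_zpow_neg_valuation hw0, ← zpow_natCast _ 2,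
        ← _root_.zpow_mul]
      ring_nf
    have h2 : ‖(p : ℚ_[p]) * z ^ 2‖ = (p : ℝ) ^ (-(1 + 2 * z.valuation)) := by
      rw [norm_mul, norm_pow, Padic.norm_eq_zpow_neg_valuation hpq, Padic.norm_eq_zpow_neg_valuation hz,
        ← zpow_natCast _ 2, ← _root_.zpow_mul, ← zpow_add₀ (by positivity : (p:ℝ) ≠ 0)]
      norm_num [Padic.valuation_p]
      ring_nf
    rw [h1, h2] at hxy
    have := zpow_right_injective₀ (by positivity : (0:ℝ) < p) (by linarith) hxy
    omega

end Aux

/-- For any orthogonal basis `(g, h, n)` of `ℚ_p³` w.r.t. the form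
with Gram matrix `A = diag(1, -v, p)`: `Q₊(g) ≠ 0` and `-Q₊(h)/Q₊(g)` is not a
square; equivalently there is no `s` with `Q₊(g)·s² = -Q₊(h)`. -/
theorem neg_alpha_not_square
    (p : ℕ) [Fact p.Prime] (hp : p ≠ 2)
    (v : ℚ_[p]) (hv : ‖v‖ = 1) (hvsq : ¬ IsSquare v)
    (A : Matrix (Fin 3) (Fin 3) ℚ_[p])
    (hA : A = Matrix.diagonal ![1, -v, (p : ℚ_[p])])
    (Q : (Fin 3 → ℚ_[p]) → ℚ_[p]) (hQ : ∀ z, Q z = z ⬝ᵥ A.mulVec z)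
    (B : (Fin 3 → ℚ_[p]) → (Fin 3 → ℚ_[p]) → ℚ_[p])
    (hB : ∀ z w, B z w = z ⬝ᵥ A.mulVec w)
    (g h n : Fin 3 → ℚ_[p])
    (hbasis : LinearIndependent ℚ_[p] ![g, h, n])
    (hgh : B g h = 0) (hgn : B g n = 0) (hhn : B h n = 0) :
    Q g ≠ 0 ∧ ¬ IsSquare (-(Q h) / Q g) ∧ ¬ ∃ s : ℚ_[p], Q g * s ^ 2 = -(Q h) := by
  have hQ' : ∀ z : Fin 3 → ℚ_[p], Q z = z 0 ^ 2 - v * z 1 ^ 2 + p * z 2 ^ 2 := by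
    intro z
    rw [hQ, hA]
    simp [Matrix.mulVec, dotProduct, Fin.sum_univ_three, Matrix.diagonal]
    ring
  have hB' : ∀ z w : Fin 3 → ℚ_[p], B z w = z 0 * w 0 - v * (z 1 * w 1) + p * (z 2 * w 2) := by
    intro z w
    rw [hB, hA]
    simp [Matrix.mulVec, dotProduct, Fin.sum_univ_three, Matrix.diagonal]
    ring
  have haniso : ∀ z : Fin 3 → ℚ_[p], Q z = 0 → z = 0 := by
    intro z hz
    rw [hQ'] at hz
    obtain ⟨h0, h1, h2⟩ := aux_aniso hp v hv hvsq _ _ _ hz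
    funext i
    fin_cases i <;> assumption
  have hgne : g ≠ 0 := by
    have := hbasis.ne_zero 0
    simpa using this
  have hQg : Q g ≠ 0 := fun hc => hgne (haniso g hc)
  have hkey : ¬ ∃ s : ℚ_[p], Q g * s ^ 2 = -(Q h) := by
    rintro ⟨s, hs⟩
    have hw : Q (s • g + h) = 0 := by
      rw [hQ' (s • g + h)]
      rw [hQ' g, hQ' h] at hs
      rw [hB' g h] at hgh
      simp only [Pi.add_apply, Pi.smul_apply, smul_eq_mul]
      linear_combination hs + 2 * s * hgh
    have hw0 : s • g + h = 0 := haniso _ hw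
    have hli := Fintype.linearIndependent_iff.mp hbasis ![s, 1, 0]
    have hsum : ∑ i, (![s, 1, 0] : Fin 3 → ℚ_[p]) i • ![g, h, n] i = 0 := by
      simpa [Fin.sum_univ_three] using hw0
    have := hli hsum 1
    simp at this
  refine ⟨hQg, ?_, hkey⟩
  rintro ⟨r, hr⟩
  exact hkey ⟨r, by field_simp [hQg] at hr; linear_combination -hr⟩
end
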